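/- On a bounded Vilenkin group, for every fixed N ∈ ℕ₊, ∫_{G_m \ I_N} |K_n^ψ(x)| dμ(x) → 0 as n → ∞, where K_n^ψ is the n-th Vilenkin-Fejér kernel. -/

import Mathlib

open MeasureTheory Filter Complex

/-- The (bounded) Vilenkin group `G_m = ∏_k Z_{m_k}`. -/
abbrev VilGroup (m : ℕ → ℕ) : Type := Π k, ZMod (m k)

/-- The generalized powers `M_0 = 1`, `M_{k+1} = m_k M_k`. -/
def Mgen (m : ℕ → ℕ) : ℕ → ℕ
  | 0 => 1
  | k + 1 => m k * Mgen m k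

/-- The `j`-th digit of `n` in the `M`-adic (mixed radix) number system. -/
def vDigit (m : ℕ → ℕ) (n j : ℕ) : ℕ := (n / Mgen m j) % m j

/-- The generalized Rademacher functions `r_k(x) = exp(2πi x_k / m_k)`. -/
noncomputable def rademacher (m : ℕ → ℕ) (k : ℕ) (x : VilGroup m) : ℂ :=
  Complex.exp (2 * Real.pi * Complex.I * ((x k).val : ℂ) / (m k : ℂ))

/-- The Vilenkin functions `ψ_n = ∏_k r_k^{n_k}`. -/
noncomputable def vilenkin (m : ℕ → ℕ) (n : ℕ) (x : VilGroup m) : ℂ :=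
  ∏ j ∈ Finset.range (n + 1), (rademacher m j x) ^ (vDigit m n j)

/-- The Vilenkin-Dirichlet kernels `D_k^ψ = ∑_{j<k} ψ_j`. -/
noncomputable def vilenkinDirichlet (m : ℕ → ℕ) (k : ℕ) (x : VilGroup m) : ℂ :=
  ∑ j ∈ Finset.range k, vilenkin m j x

/-- The Vilenkin-Fejér kernels `K_n^ψ = (1/n) ∑_{k<n} D_k^ψ`. -/
noncomputable def vilenkinFejer (m : ℕ → ℕ) (n : ℕ) (x : VilGroup m) : ℂ :=
  (1 / n) * ∑ k ∈ Finset.range n, vilenkinDirichlet m k x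

/-- The cylinder `I_N = I_N(0) = {y : y_0 = ⋯ = y_{N-1} = 0}`. -/
def cylV (m : ℕ → ℕ) (N : ℕ) : Set (VilGroup m) := {y | ∀ j < N, y j = 0}

/-- The Vilenkin interval `I_N(x)`. -/
def cylVAt (m : ℕ → ℕ) (N : ℕ) (x : VilGroup m) : Set (VilGroup m) :=
  {y | ∀ j < N, y j = x j}

/-- `μ` is the normalized Haar measure on `G_m`, characterized by
`μ(I_N(x)) = 1/M_N` for every cylinder. -/
def IsVilHaar (m : ℕ → ℕ) (μ : Measure (VilGroup m)) : Prop :=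
  ∀ (N : ℕ) (x : VilGroup m), μ (cylVAt m N x) = (Mgen m N : ENNReal)⁻¹

/-- The `k`-th Vilenkin-Fourier coefficient. -/
noncomputable def vCoef (m : ℕ → ℕ) (μ : Measure (VilGroup m))
    (f : VilGroup m → ℂ) (k : ℕ) : ℂ :=
  ∫ x, f x * (starRingEnd ℂ) (vilenkin m k x) ∂μ

/-- The partial sums `S_n^ψ f` of the Vilenkin-Fourier series. -/
noncomputable def vPartialSum (m : ℕ → ℕ) (μ : Measure (VilGroup m))
    (f : VilGroup m → ℂ) (n : ℕ) (x : VilGroup m) : ℂ :=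
  ∑ k ∈ Finset.range n, vCoef m μ f k * vilenkin m k x

/-- The Vilenkin-Fejér means `σ_n^ψ f = (1/n) ∑_{k<n} S_k^ψ f`. -/
noncomputable def vFejerMean (m : ℕ → ℕ) (μ : Measure (VilGroup m))
    (f : VilGroup m → ℂ) (n : ℕ) (x : VilGroup m) : ℂ :=
  (1 / n) * ∑ k ∈ Finset.range n, vPartialSum m μ f k x

/-- `Complex.abs` as an absolute value built from the norm. -/
noncomputable def Complex.abs : AbsoluteValue ℂ ℝ where
  toFun z := ‖z‖
  map_mul' := norm_mul
  nonneg' := norm_nonneg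
  eq_zero' _ := norm_eq_zero
  add_le' := norm_add_le

lemma Complex.abs_natCast (n : ℕ) : Complex.abs (n : ℂ) = n := Complex.norm_natCast n

lemma Complex.abs_exp_ofReal_mul_I (x : ℝ) : Complex.abs (Complex.exp (x * Complex.I)) = 1 :=
  Complex.norm_exp_ofReal_mul_I x

lemma Complex.continuous_abs : Continuous Complex.abs := continuous_norm

section digits
variable {m : ℕ → ℕ} (hm : ∀ k, 2 ≤ m k)
include hm

lemma Mgen_pos (t : ℕ) : 0 < Mgen m t := by
  induction t with
  | zero => simp [Mgen]
  | succ t ih => exact Nat.mul_pos (by have := hm t; omega) ih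

lemma two_pow_le_Mgen (t : ℕ) : 2 ^ t ≤ Mgen m t := by
  induction t with
  | zero => simp [Mgen]
  | succ t ih =>
    have := hm t
    calc 2 ^ (t+1) = 2 * 2 ^ t := by ring
    _ ≤ m t * Mgen m t := Nat.mul_le_mul this ih
    _ = Mgen m (t+1) := rfl

omit hm in
lemma Mgen_dvd {s t : ℕ} (h : s ≤ t) : Mgen m s ∣ Mgen m t := by
  induction t with
  | zero => simp [Nat.le_zero.mp h]
  | succ t ih =>
    rcases Nat.lt_or_ge s (t+1) with h' | h'
    · exact dvd_mul_of_dvd_right (ih (Nat.lt_succ_iff.mp h')) _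
    · have : s = t + 1 := le_antisymm h h'
      simp [this]

lemma Mgen_mono {s t : ℕ} (h : s ≤ t) : Mgen m s ≤ Mgen m t :=
  Nat.le_of_dvd (Mgen_pos hm t) (Mgen_dvd h)

lemma lt_Mgen_of_lt_two_pow {n t : ℕ} (h : n < 2 ^ t) : n < Mgen m t :=
  lt_of_lt_of_le h (two_pow_le_Mgen hm t)

lemma vDigit_lt (n j : ℕ) : vDigit m n j < m j :=
  Nat.mod_lt _ (by have := hm j; omega)

omit hm in
lemma vDigit_eq_zero_of_lt {n j : ℕ} (h : n < Mgen m j) : vDigit m n j = 0 := by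
  simp [vDigit, Nat.div_eq_of_lt h]

lemma vDigit_eq_zero_of_dvd {b j : ℕ} (h : Mgen m (j+1) ∣ b) : vDigit m b j = 0 := by
  obtain ⟨u, rfl⟩ := h
  have h2 : Mgen m (j+1) * u / Mgen m j = m j * u := by
    show m j * Mgen m j * u / Mgen m j = m j * u
    rw [mul_comm (m j) (Mgen m j), mul_assoc, Nat.mul_div_cancel_left _ (Mgen_pos hm j)]
  simp [vDigit, h2]

lemma vDigit_add {s b p : ℕ} (hb : Mgen m s ∣ b) (hp : p < Mgen m s) (j : ℕ) :
    vDigit m (b + p) j = vDigit m b j + vDigit m p j := by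
  rcases Nat.lt_or_ge j s with hj | hj
  · have hdvd : Mgen m (j+1) ∣ b := dvd_trans (Mgen_dvd hj) hb
    rw [vDigit_eq_zero_of_dvd hm hdvd, Nat.zero_add]
    obtain ⟨u, rfl⟩ := hdvd
    have h1 : Mgen m (j+1) * u + p = Mgen m j * (m j * u) + p := by
      show m j * Mgen m j * u + p = _; ring
    unfold vDigit
    rw [h1, Nat.mul_add_div (Mgen_pos hm j), Nat.mul_add_mod]
  · have hps : Mgen m s ≤ Mgen m j := Mgen_mono hm hj
    rw [vDigit_eq_zero_of_lt (lt_of_lt_of_le hp hps), Nat.add_zero]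
    have hd : Mgen m s ∣ b % Mgen m j := (Nat.dvd_mod_iff (Mgen_dvd hj)).mpr hb
    have hrp : b % Mgen m j + p < Mgen m j := by
      rcases Nat.eq_zero_or_pos (b % Mgen m j) with h0 | h0
      · omega
      · have h1 : Mgen m s ∣ Mgen m j - b % Mgen m j := Nat.dvd_sub (Mgen_dvd hj) hd
        have h2 : b % Mgen m j < Mgen m j := Nat.mod_lt _ (Mgen_pos hm j)
        have h3 : Mgen m s ≤ Mgen m j - b % Mgen m j := Nat.le_of_dvd (by omega) h1
        omega
    have key : (b + p) / Mgen m j = b / Mgen m j := by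
      conv_lhs => rw [← Nat.div_add_mod b (Mgen m j)]
      rw [Nat.add_assoc, Nat.mul_add_div (Mgen_pos hm j), Nat.div_eq_of_lt hrp, Nat.add_zero]
    unfold vDigit
    rw [key]

/-- digit of `c * M_t` at `t` is `c % m t`; below `t` it's 0. -/
lemma vDigit_mul_Mgen_self (c t : ℕ) : vDigit m (c * Mgen m t) t = c % m t := by
  unfold vDigit
  rw [Nat.mul_div_cancel _ (Mgen_pos hm t)]

/-- mixed radix expansion: `k = ∑_{j<t} d_j M_j` for `k < M_t`. -/
lemma sum_vDigit_mul {t k : ℕ} (hk : k < Mgen m t) :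
    ∑ j ∈ Finset.range t, vDigit m k j * Mgen m j = k := by
  induction t generalizing k with
  | zero => simp [Mgen] at hk; simp [hk]
  | succ t ih =>
    have hdm : k = (k / Mgen m t) * Mgen m t + k % Mgen m t := by
      rw [Nat.mul_comm]; exact (Nat.div_add_mod k (Mgen m t)).symm
    have hmod : k % Mgen m t < Mgen m t := Nat.mod_lt _ (Mgen_pos hm t)
    have hdig : ∀ j, vDigit m k j = vDigit m ((k / Mgen m t) * Mgen m t) j + vDigit m (k % Mgen m t) j := by
      intro j; conv_lhs => rw [hdm]
      exact vDigit_add hm (dvd_mul_left _ _) hmod j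
    have hdivlt : k / Mgen m t < m t := by
      rw [Nat.div_lt_iff_lt_mul (Mgen_pos hm t)]
      exact hk
    rw [Finset.sum_range_succ]
    have hlow : ∀ j ∈ Finset.range t, vDigit m k j * Mgen m j = vDigit m (k % Mgen m t) j * Mgen m j := by
      intro j hj
      rw [hdig j, vDigit_eq_zero_of_dvd hm (Dvd.dvd.mul_left (Mgen_dvd (Finset.mem_range.mp hj)) _ )]
      · ring_nf
    rw [Finset.sum_congr rfl hlow, ih hmod, hdig t,
      vDigit_eq_zero_of_lt hmod, vDigit_mul_Mgen_self hm, Nat.mod_eq_of_lt hdivlt]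
    rw [Nat.add_zero]
    conv_rhs => rw [hdm]
    exact Nat.add_comm _ _

end digits

section vil
variable {m : ℕ → ℕ} (hm : ∀ k, 2 ≤ m k)


lemma rademacher_abs (k : ℕ) (x : VilGroup m) : Complex.abs (rademacher m k x) = 1 := by
  unfold rademacher
  rw [show 2 * Real.pi * Complex.I * ((x k).val : ℂ) / (m k : ℂ)
      = Complex.I * (2 * Real.pi * ((x k).val : ℝ) / (m k : ℝ) : ℝ) by push_cast; ring]
  rw [mul_comm, Complex.abs_exp_ofReal_mul_I]

lemma rademacher_of_eq_zero {k : ℕ} {x : VilGroup m} (h : x k = 0) : rademacher m k x = 1 := by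
  unfold rademacher
  rw [h]
  simp

include hm

lemma rademacher_ne_one {k : ℕ} {x : VilGroup m} (h : x k ≠ 0) : rademacher m k x ≠ 1 := by
  haveI : NeZero (m k) := ⟨by have := hm k; omega⟩
  intro hc
  rw [rademacher, Complex.exp_eq_one_iff] at hc
  obtain ⟨n, hn⟩ := hc
  have hmk : (m k : ℂ) ≠ 0 := by
    simp only [ne_eq, Nat.cast_eq_zero]; have := hm k; omega
  have hpi : (2 * (Real.pi:ℂ) * Complex.I) ≠ 0 := by
    simp [Real.pi_ne_zero, Complex.I_ne_zero]
  have hval : ((x k).val : ℂ) = n * (m k : ℂ) := by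
    field_simp at hn
    have h2 : 2 * (Real.pi:ℂ) * Complex.I * ((x k).val : ℂ) = 2 * (Real.pi:ℂ) * Complex.I * (n * (m k:ℂ)) := by
      rw [hn]; ring
    exact mul_left_cancel₀ hpi h2
  have hint : ((x k).val : ℤ) = n * (m k : ℤ) := by
    exact_mod_cast hval
  have hv0 : (x k).val ≠ 0 := fun h0 => h ((ZMod.val_eq_zero _).mp h0)
  have hvlt : (x k).val < m k := ZMod.val_lt (x k)
  have : (m k : ℤ) ∣ ((x k).val : ℤ) := Dvd.intro_left n hint.symm
  have : (m k) ∣ (x k).val := by exact_mod_cast this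
  exact hv0 (Nat.eq_zero_of_dvd_of_lt this hvlt)

lemma rademacher_pow_m {k : ℕ} (x : VilGroup m) : rademacher m k x ^ (m k) = 1 := by
  have hmk : (m k : ℂ) ≠ 0 := by
    simp only [ne_eq, Nat.cast_eq_zero]; have := hm k; omega
  rw [rademacher, ← Complex.exp_nat_mul]
  rw [show (m k : ℂ) * (2 * Real.pi * Complex.I * ((x k).val : ℂ) / (m k : ℂ))
      = ((x k).val : ℤ) * (2 * Real.pi * Complex.I) by push_cast; field_simp]
  exact Complex.exp_int_mul_two_pi_mul_I _

lemma sum_rademacher {k : ℕ} (x : VilGroup m) :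
    ∑ c ∈ Finset.range (m k), rademacher m k x ^ c
      = if x k = 0 then (m k : ℂ) else 0 := by
  by_cases h : x k = 0
  · simp [h, rademacher_of_eq_zero h]
  · rw [if_neg h, geom_sum_eq (rademacher_ne_one hm h), rademacher_pow_m hm x]
    simp

end vil

section vil2
variable {m : ℕ → ℕ} (hm : ∀ k, 2 ≤ m k)
include hm

lemma vDigit_high_zero {n j : ℕ} (h : n + 1 ≤ j) : vDigit m n j = 0 := by
  apply vDigit_eq_zero_of_lt
  apply lt_Mgen_of_lt_two_pow hm
  calc n < 2 ^ n := Nat.lt_two_pow_self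
  _ ≤ 2 ^ j := Nat.pow_le_pow_right (by norm_num) (by omega)

lemma vilenkin_eq_prod {n R : ℕ} (hR : n + 1 ≤ R) (x : VilGroup m) :
    vilenkin m n x = ∏ j ∈ Finset.range R, (rademacher m j x) ^ (vDigit m n j) := by
  have hsplit := Finset.prod_range_add (fun j => (rademacher m j x) ^ (vDigit m n j)) (n+1) (R-(n+1))
  rw [show (n+1) + (R-(n+1)) = R from by omega] at hsplit
  have hext : ∏ j ∈ Finset.range (R-(n+1)), (rademacher m (n+1+j) x) ^ (vDigit m n (n+1+j)) = 1 :=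
    Finset.prod_eq_one (fun j _ => by rw [vDigit_high_zero hm (by omega), pow_zero])
  rw [vilenkin, hsplit, hext, mul_one]

lemma vilenkin_abs (n : ℕ) (x : VilGroup m) : Complex.abs (vilenkin m n x) = 1 := by
  rw [vilenkin, map_prod]
  apply Finset.prod_eq_one
  intro j _
  rw [map_pow, rademacher_abs, one_pow]

lemma vilenkin_add {s b p : ℕ} (hb : Mgen m s ∣ b) (hp : p < Mgen m s) (x : VilGroup m) :
    vilenkin m (b + p) x = vilenkin m b x * vilenkin m p x := by
  rw [vilenkin_eq_prod hm (show b + p + 1 ≤ b + p + 1 by omega) x,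
    vilenkin_eq_prod hm (show b + 1 ≤ b + p + 1 by omega) x,
    vilenkin_eq_prod hm (show p + 1 ≤ b + p + 1 by omega) x,
    ← Finset.prod_mul_distrib]
  apply Finset.prod_congr rfl
  intro j _
  rw [vDigit_add hm hb hp j, pow_add]

lemma vilenkin_mul_Mgen {c t : ℕ} (hc : c < m t) (x : VilGroup m) :
    vilenkin m (c * Mgen m t) x = rademacher m t x ^ c := by
  rw [vilenkin_eq_prod hm (show c * Mgen m t + 1 ≤ c * Mgen m t + t + 1 by omega) x]
  rw [Finset.prod_eq_single t]
  · rw [vDigit_mul_Mgen_self hm, Nat.mod_eq_of_lt hc]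
  · intro j hj hjt
    rcases Nat.lt_or_ge j t with h | h
    · rw [vDigit_eq_zero_of_dvd hm (dvd_mul_of_dvd_right (Mgen_dvd h) c), pow_zero]
    · have hjt' : t < j := by omega
      rw [vDigit_eq_zero_of_lt ?_, pow_zero]
      calc c * Mgen m t < m t * Mgen m t := by
            have := Mgen_pos hm t; exact (Nat.mul_lt_mul_right this).mpr hc
      _ = Mgen m (t+1) := rfl
      _ ≤ Mgen m j := Mgen_mono hm hjt'
  · intro h
    exfalso
    exact h (Finset.mem_range.mpr (by omega))

lemma vilenkin_cylindrical {n t : ℕ} (hn : n < Mgen m t) {x y : VilGroup m}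
    (h : ∀ i < t, x i = y i) : vilenkin m n x = vilenkin m n y := by
  rw [vilenkin, vilenkin]
  apply Finset.prod_congr rfl
  intro j _
  rcases Nat.lt_or_ge j t with hj | hj
  · rw [show rademacher m j x = rademacher m j y by rw [rademacher, rademacher, h j hj]]
  · rw [vDigit_eq_zero_of_lt (lt_of_lt_of_le hn (Mgen_mono hm hj)), pow_zero, pow_zero]

end vil2


noncomputable def Fc (m : ℕ → ℕ) (n : ℕ) (x : VilGroup m) : ℂ :=
  ∑ j ∈ Finset.range n, ((n - 1 - j : ℕ) : ℂ) * vilenkin m j x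

lemma sum_range_mul' {β : Type*} [AddCommMonoid β] (f : ℕ → β) (a b : ℕ) :
    ∑ k ∈ Finset.range (a * b), f k = ∑ c ∈ Finset.range a, ∑ p ∈ Finset.range b, f (c * b + p) := by
  induction a with
  | zero => simp
  | succ a ih =>
    rw [Nat.succ_mul, Finset.sum_range_add, ih, Finset.sum_range_succ]

section fejer
variable {m : ℕ → ℕ} (hm : ∀ k, 2 ≤ m k)
include hm

lemma Dirichlet_Mgen_succ (t : ℕ) (x : VilGroup m) :
    vilenkinDirichlet m (Mgen m (t+1)) x
      = (∑ c ∈ Finset.range (m t), rademacher m t x ^ c) * vilenkinDirichlet m (Mgen m t) x := by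
  show ∑ k ∈ Finset.range (m t * Mgen m t), vilenkin m k x = _
  rw [sum_range_mul', Finset.sum_mul]
  apply Finset.sum_congr rfl
  intro c hc
  rw [vilenkinDirichlet, Finset.mul_sum]
  apply Finset.sum_congr rfl
  intro p hp
  rw [vilenkin_add hm (dvd_mul_left _ _) (Finset.mem_range.mp hp),
    vilenkin_mul_Mgen hm (Finset.mem_range.mp hc)]

lemma Dirichlet_Mgen_eq_zero {t : ℕ} {x : VilGroup m} (hx : x ∉ cylV m t) :
    vilenkinDirichlet m (Mgen m t) x = 0 := by
  induction t with
  | zero => exact absurd (fun j hj => absurd hj (Nat.not_lt_zero j)) hx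
  | succ t ih =>
    rw [Dirichlet_Mgen_succ hm]
    by_cases h : x ∈ cylV m t
    · have hxt : x t ≠ 0 := by
        intro h0
        exact hx (fun j hj => by
          rcases Nat.lt_or_ge j t with h' | h'
          · exact h j h'
          · have : j = t := by omega
            rw [this]; exact h0)
      rw [sum_rademacher hm, if_neg hxt, zero_mul]
    · rw [ih h, mul_zero]

omit hm in
lemma Fc_zero (x : VilGroup m) : Fc m 0 x = 0 := by simp [Fc]

lemma Fc_abs_le (n : ℕ) (x : VilGroup m) : Complex.abs (Fc m n x) ≤ n * n := by
  calc Complex.abs (Fc m n x) ≤ ∑ j ∈ Finset.range n, Complex.abs (((n - 1 - j : ℕ) : ℂ) * vilenkin m j x) := by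
        exact Complex.abs.sum_le _ _
  _ ≤ ∑ j ∈ Finset.range n, (n : ℝ) := by
      apply Finset.sum_le_sum
      intro j hj
      rw [map_mul, vilenkin_abs hm, mul_one, Complex.abs_natCast]
      exact_mod_cast Nat.sub_le_iff_le_add.mpr (by omega)
  _ = n * n := by simp [mul_comm]

lemma Gsum_eq (n : ℕ) (x : VilGroup m) :
    ∑ k ∈ Finset.range n, vilenkinDirichlet m k x = Fc m n x := by
  induction n with
  | zero => simp [Fc]
  | succ n ih =>
    rw [Finset.sum_range_succ, ih, Fc, Fc, Finset.sum_range_succ]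
    rw [show (n + 1 - 1 - n : ℕ) = 0 by omega]
    simp only [Nat.cast_zero, zero_mul, add_zero]
    rw [vilenkinDirichlet, ← Finset.sum_add_distrib]
    apply Finset.sum_congr rfl
    intro j hj
    have hj' := Finset.mem_range.mp hj
    rw [show ((n + 1 - 1 - j : ℕ) : ℂ) = ((n - 1 - j : ℕ) : ℂ) + 1 by
      rw [show (n + 1 - 1 - j : ℕ) = (n - 1 - j) + 1 by omega]; push_cast; ring]
    ring

end fejer

section split
variable {m : ℕ → ℕ} (hm : ∀ k, 2 ≤ m k)
include hm

lemma Fc_split {a t q : ℕ} (ha : a ≤ m t) (hq : q < Mgen m t) (x : VilGroup m) :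
    Fc m (a * Mgen m t + q) x
      = (∑ c ∈ Finset.range a, (((a - 1 - c) * Mgen m t + q : ℕ) : ℂ) * rademacher m t x ^ c)
          * vilenkinDirichlet m (Mgen m t) x
        + (∑ c ∈ Finset.range a, rademacher m t x ^ c) * Fc m (Mgen m t) x
        + vilenkin m (a * Mgen m t) x * Fc m q x := by
  set M := Mgen m t with hM
  have hMpos : 0 < M := Mgen_pos hm t
  rw [Fc, Finset.sum_range_add]
  -- second block
  have hblock2 : ∑ p ∈ Finset.range q, ((a * M + q - 1 - (a * M + p) : ℕ) : ℂ) * vilenkin m (a * M + p) x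
      = vilenkin m (a * M) x * Fc m q x := by
    rw [Fc, Finset.mul_sum]
    apply Finset.sum_congr rfl
    intro p hp
    have hp' := Finset.mem_range.mp hp
    rw [show (a * M + q - 1 - (a * M + p) : ℕ) = q - 1 - p by omega,
      vilenkin_add hm (dvd_mul_left M a) (lt_trans hp' hq)]
    ring
  -- first block
  have hblock1 : ∑ k ∈ Finset.range (a * M), ((a * M + q - 1 - k : ℕ) : ℂ) * vilenkin m k x
      = (∑ c ∈ Finset.range a, (((a - 1 - c) * M + q : ℕ) : ℂ) * rademacher m t x ^ c)
          * vilenkinDirichlet m M x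
        + (∑ c ∈ Finset.range a, rademacher m t x ^ c) * Fc m M x := by
    rw [sum_range_mul' (fun k => ((a * M + q - 1 - k : ℕ) : ℂ) * vilenkin m k x) a M,
      Finset.sum_mul, Finset.sum_mul, ← Finset.sum_add_distrib]
    apply Finset.sum_congr rfl
    intro c hc
    have hc' := Finset.mem_range.mp hc
    have hcoef : ∀ p < M, (a * M + q - 1 - (c * M + p) : ℕ)
        = ((a - 1 - c) * M + q) + (M - 1 - p) := by
      intro p hp
      have h1 : a * M = c * M + (a - 1 - c) * M + M := by
        obtain ⟨d, hd⟩ : ∃ d, a = c + d + 1 := ⟨a - 1 - c, by omega⟩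
        have hd2 : a - 1 - c = d := by omega
        rw [hd2, hd, Nat.add_mul, Nat.add_mul, Nat.one_mul]
      omega
    have hpsi : ∀ p < M, vilenkin m (c * M + p) x = rademacher m t x ^ c * vilenkin m p x := by
      intro p hp
      rw [hM] at hp ⊢
      rw [vilenkin_add hm (dvd_mul_left _ _) hp, vilenkin_mul_Mgen hm (lt_of_lt_of_le hc' ha)]
    calc ∑ p ∈ Finset.range M, ((a * M + q - 1 - (c * M + p) : ℕ) : ℂ) * vilenkin m (c * M + p) x
        = ∑ p ∈ Finset.range M, ((((a - 1 - c) * M + q : ℕ) : ℂ) + ((M - 1 - p : ℕ) : ℂ))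
            * (rademacher m t x ^ c * vilenkin m p x) := by
          apply Finset.sum_congr rfl
          intro p hp
          have hp' := Finset.mem_range.mp hp
          rw [hcoef p hp', hpsi p hp']
          push_cast
          ring
    _ = (((a - 1 - c) * M + q : ℕ) : ℂ) * rademacher m t x ^ c * vilenkinDirichlet m M x
        + rademacher m t x ^ c * Fc m M x := by
          rw [vilenkinDirichlet, Fc, Finset.mul_sum, Finset.mul_sum,
            ← Finset.sum_add_distrib]
          apply Finset.sum_congr rfl
          intro p hp
          ring
  rw [hblock1, hblock2]

lemma Fc_Mgen_succ {t : ℕ} {x : VilGroup m} (hx : x ∉ cylV m t) :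
    Fc m (Mgen m (t+1)) x = (if x t = 0 then (m t : ℂ) else 0) * Fc m (Mgen m t) x := by
  have h0 : Mgen m (t+1) = m t * Mgen m t + 0 := by rfl
  rw [h0, Fc_split hm (le_refl (m t)) (Mgen_pos hm t) x,
    Dirichlet_Mgen_eq_zero hm hx, Fc_zero, sum_rademacher hm]
  ring

end split

section ptwise
variable {m : ℕ → ℕ} (hm : ∀ k, 2 ≤ m k)
include hm

lemma Fc_pointwise_bound {B N : ℕ} (hB : ∀ k, m k ≤ B) (hN : 0 < N) {x : VilGroup m}
    (hx : x ∉ cylV m N) :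
    ∀ n K, n < Mgen m (K+1) →
      Complex.abs (Fc m n x)
        ≤ B * ∑ t ∈ Finset.Icc N K, Complex.abs (Fc m (Mgen m t) x) + ((Mgen m N : ℝ))^2 := by
  intro n
  induction n using Nat.strong_induction_on with
  | _ n ih =>
    intro K hK
    have hsum_nonneg : ∀ K', (0:ℝ) ≤ ∑ t ∈ Finset.Icc N K', Complex.abs (Fc m (Mgen m t) x) :=
      fun K' => Finset.sum_nonneg (fun t _ => AbsoluteValue.nonneg _ _)
    rcases Nat.lt_or_ge n (Mgen m N) with hlt | hge
    · -- base case
      have h1 := Fc_abs_le hm n x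
      have h2 : (n:ℝ) * n ≤ ((Mgen m N : ℝ))^2 := by
        have : (n:ℝ) ≤ (Mgen m N : ℝ) := by exact_mod_cast le_of_lt hlt
        rw [sq]
        exact mul_le_mul this this (by positivity) (by positivity)
      have h3 : (0:ℝ) ≤ B * ∑ t ∈ Finset.Icc N K, Complex.abs (Fc m (Mgen m t) x) :=
        mul_nonneg (by positivity) (hsum_nonneg K)
      linarith
    · -- main case
      have hNK : N ≤ K := by
        by_contra hcon
        have : Mgen m (K+1) ≤ Mgen m N := Mgen_mono hm (by omega)
        omega
      set P : ℕ → Prop := fun t => Mgen m t ≤ n with hP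
      have hdec : DecidablePred P := fun t => Nat.decLe _ _
      set T := Nat.findGreatest P K with hT
      have hTN : N ≤ T := Nat.le_findGreatest hNK hge
      have hTK : T ≤ K := Nat.findGreatest_le K
      have hTle : Mgen m T ≤ n := Nat.findGreatest_spec (P := P) hNK (show P N from hge)
      have hTup : n < Mgen m (T+1) := by
        rcases Nat.lt_or_ge T K with h | h
        · have := Nat.findGreatest_is_greatest (Nat.lt_succ_self T |> fun _ => Nat.lt_succ_of_le (le_refl T)) (by omega : T + 1 ≤ K)
          simpa [hP] using Nat.lt_of_not_le this
        · have : T = K := le_antisymm hTK h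
          rw [this]; exact hK
      set a := n / Mgen m T with ha'
      set q := n % Mgen m T with hq'
      have hn_eq : n = a * Mgen m T + q := by rw [mul_comm]; exact (Nat.div_add_mod n _).symm
      have ha1 : 1 ≤ a := (Nat.one_le_div_iff (Mgen_pos hm T)).mpr hTle
      have ha : a < m T := by
        rw [ha', Nat.div_lt_iff_lt_mul (Mgen_pos hm T)]
        exact hTup
      have hq : q < Mgen m T := Nat.mod_lt _ (Mgen_pos hm T)
      have hxT : x ∉ cylV m T := fun h => hx (fun j hj => h j (lt_of_lt_of_le hj hTN))
      have hqn : q < n := lt_of_lt_of_le hq hTle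
      -- split
      have hsplit := Fc_split hm (le_of_lt ha) hq x
      rw [Dirichlet_Mgen_eq_zero hm hxT, mul_zero, zero_add] at hsplit
      have habs : Complex.abs (Fc m n x)
          ≤ (B:ℝ) * Complex.abs (Fc m (Mgen m T) x) + Complex.abs (Fc m q x) := by
        rw [hn_eq, hsplit]
        refine (Complex.abs.add_le _ _).trans ?_
        rw [map_mul, map_mul, vilenkin_abs hm, one_mul]
        gcongr
        refine (Complex.abs.sum_le _ _).trans ?_
        have h1 : ∀ c ∈ Finset.range a, Complex.abs (rademacher m T x ^ c) = (1:ℝ) := by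
          intro c _; rw [map_pow, rademacher_abs, one_pow]
        rw [Finset.sum_congr rfl h1, Finset.sum_const, Finset.card_range, nsmul_eq_mul, mul_one]
        exact_mod_cast le_trans (le_of_lt ha) (hB T)
      -- IH on q
      have hTpos : 1 ≤ T := le_trans hN hTN
      have hqK : q < Mgen m ((T-1)+1) := by
        rw [show T - 1 + 1 = T by omega]; exact hq
      have hIH := ih q hqn (T-1) hqK
      have hstep : ∑ t ∈ Finset.Icc N (T-1), Complex.abs (Fc m (Mgen m t) x)
            + Complex.abs (Fc m (Mgen m T) x)
          = ∑ t ∈ Finset.Icc N T, Complex.abs (Fc m (Mgen m t) x) := by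
        rw [show T = (T-1)+1 by omega, Finset.sum_Icc_succ_top (by omega : N ≤ T - 1 + 1)]
        simp
      have hsub : ∑ t ∈ Finset.Icc N T, Complex.abs (Fc m (Mgen m t) x)
          ≤ ∑ t ∈ Finset.Icc N K, Complex.abs (Fc m (Mgen m t) x) := by
        apply Finset.sum_le_sum_of_subset_of_nonneg
        · exact Finset.Icc_subset_Icc_right hTK
        · intro t _ _; exact AbsoluteValue.nonneg _ _
      calc Complex.abs (Fc m n x)
          ≤ (B:ℝ) * Complex.abs (Fc m (Mgen m T) x) + Complex.abs (Fc m q x) := habs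
      _ ≤ (B:ℝ) * Complex.abs (Fc m (Mgen m T) x)
            + (B * ∑ t ∈ Finset.Icc N (T-1), Complex.abs (Fc m (Mgen m t) x) + ((Mgen m N : ℝ))^2) := by
          linarith [hIH]
      _ = B * ∑ t ∈ Finset.Icc N T, Complex.abs (Fc m (Mgen m t) x) + ((Mgen m N : ℝ))^2 := by
          rw [← hstep]; ring
      _ ≤ B * ∑ t ∈ Finset.Icc N K, Complex.abs (Fc m (Mgen m t) x) + ((Mgen m N : ℝ))^2 := by
          have hB0 : (0:ℝ) ≤ (B:ℝ) := by positivity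
          nlinarith [hsub, hB0]

end ptwise


section meas
variable {m : ℕ → ℕ} (hm : ∀ k, 2 ≤ m k)

lemma measurable_vilenkin (n : ℕ) : Measurable (vilenkin m n) := by
  apply Finset.measurable_prod
  intro j _
  have h1 : Measurable (fun z : ZMod (m j) => Complex.exp (2 * Real.pi * Complex.I * (z.val : ℂ) / (m j : ℂ)) ^ (vDigit m n j)) :=
    Measurable.of_discrete
  exact h1.comp (measurable_pi_apply j)

lemma measurable_Fc_abs (n : ℕ) : Measurable (fun x => Complex.abs (Fc m n x)) := by
  apply Continuous.measurable Complex.continuous_abs |>.comp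
  apply Finset.measurable_sum
  intro j _
  exact (measurable_vilenkin j).const_mul _

lemma measurableSet_cylV (N : ℕ) : MeasurableSet (cylV m N) := by
  have : cylV m N = ⋂ j, ⋂ (_ : j < N), (fun y : VilGroup m => y j) ⁻¹' {0} := by
    ext y; simp [cylV]
  rw [this]
  exact MeasurableSet.iInter (fun j => MeasurableSet.iInter
    (fun _ => (measurable_pi_apply j) (measurableSet_singleton 0)))

lemma measurableSet_cylVAt (N : ℕ) (z : VilGroup m) : MeasurableSet (cylVAt m N z) := by
  have : cylVAt m N z = ⋂ j, ⋂ (_ : j < N), (fun y : VilGroup m => y j) ⁻¹' {z j} := by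
    ext y; simp [cylVAt]
  rw [this]
  exact MeasurableSet.iInter (fun j => MeasurableSet.iInter
    (fun _ => (measurable_pi_apply j) (measurableSet_singleton (z j))))

variable [∀ k, NeZero (m k)]

/-- the representative point of the `k`-th cylinder of level `t`. -/
noncomputable def ptV (m : ℕ → ℕ) (k : ℕ) : VilGroup m := fun j => ((vDigit m k j : ℕ) : ZMod (m j))

/-- the index of the cylinder of level `t` containing `x`. -/
noncomputable def codeV (m : ℕ → ℕ) (x : VilGroup m) (t : ℕ) : ℕ :=
  ∑ j ∈ Finset.range t, (x j).val * Mgen m j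

lemma codeV_succ (x : VilGroup m) (t : ℕ) :
    codeV m x (t+1) = codeV m x t + (x t).val * Mgen m t := by
  rw [codeV, codeV, Finset.sum_range_succ]

include hm

lemma codeV_lt (x : VilGroup m) (t : ℕ) : codeV m x t < Mgen m t := by
  induction t with
  | zero => simp [codeV, Mgen]
  | succ t ih =>
    have hval : (x t).val ≤ m t - 1 := by
      have := ZMod.val_lt (x t); omega
    have h1 : (x t).val * Mgen m t ≤ (m t - 1) * Mgen m t :=
      Nat.mul_le_mul_right _ hval
    have h2 : m t * Mgen m t = Mgen m t + (m t - 1) * Mgen m t := by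
      obtain ⟨w, hw⟩ : ∃ w, m t = w + 1 := ⟨m t - 1, by have := hm t; omega⟩
      rw [hw, Nat.succ_sub_one]
      ring
    rw [codeV_succ]
    calc codeV m x t + (x t).val * Mgen m t < Mgen m t + (m t - 1) * Mgen m t := by
          have := ih; omega
    _ = m t * Mgen m t := h2.symm
    _ = Mgen m (t+1) := rfl

lemma vDigit_codeV (x : VilGroup m) {t j : ℕ} (hj : j < t) :
    vDigit m (codeV m x t) j = (x j).val := by
  induction t with
  | zero => omega
  | succ t ih =>
    have hstep : codeV m x (t+1) = (x t).val * Mgen m t + codeV m x t := by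
      rw [codeV_succ, Nat.add_comm]
    rw [hstep, vDigit_add hm (dvd_mul_left _ _) (codeV_lt hm x t)]
    rcases Nat.lt_or_ge j t with h | h
    · rw [vDigit_eq_zero_of_dvd hm (dvd_mul_of_dvd_right (Mgen_dvd h) _), Nat.zero_add, ih h]
    · have hjt : j = t := by omega
      subst hjt
      rw [vDigit_mul_Mgen_self hm, Nat.mod_eq_of_lt (ZMod.val_lt (x j)),
        vDigit_eq_zero_of_lt (codeV_lt hm x j), Nat.add_zero]

lemma ptV_codeV (x : VilGroup m) {t j : ℕ} (hj : j < t) :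
    ptV m (codeV m x t) j = x j := by
  rw [ptV, vDigit_codeV hm x hj, ZMod.natCast_val, ZMod.cast_id]

lemma codeV_eq_of_mem {x : VilGroup m} {t k : ℕ} (hk : k < Mgen m t)
    (hx : x ∈ cylVAt m t (ptV m k)) : codeV m x t = k := by
  have h1 : ∀ j < t, (x j).val = vDigit m k j := by
    intro j hj
    rw [hx j hj, ptV, ZMod.val_cast_of_lt (vDigit_lt hm k j)]
  calc codeV m x t = ∑ j ∈ Finset.range t, vDigit m k j * Mgen m j := by
        apply Finset.sum_congr rfl
        intro j hj
        rw [h1 j (Finset.mem_range.mp hj)]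
  _ = k := sum_vDigit_mul hm hk

lemma mem_cylVAt_ptV_codeV (x : VilGroup m) (t : ℕ) :
    x ∈ cylVAt m t (ptV m (codeV m x t)) := fun j hj => (ptV_codeV hm x hj).symm

lemma integral_cylindrical (μ : Measure (VilGroup m)) [IsProbabilityMeasure μ]
    (hμ : IsVilHaar m μ) {t : ℕ} {f : VilGroup m → ℝ} (hmeas : Measurable f)
    (hcyl : ∀ x y : VilGroup m, (∀ j < t, x j = y j) → f x = f y) :
    ∫ x, f x ∂μ = (Mgen m t : ℝ)⁻¹ * ∑ k ∈ Finset.range (Mgen m t), f (ptV m k) := by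
  have hrep : ∀ x : VilGroup m, f x
      = ∑ k ∈ Finset.range (Mgen m t),
          Set.indicator (cylVAt m t (ptV m k)) (fun _ => f (ptV m k)) x := by
    intro x
    rw [Finset.sum_eq_single (codeV m x t)]
    · rw [Set.indicator_of_mem (mem_cylVAt_ptV_codeV hm x t)]
      exact hcyl x (ptV m (codeV m x t)) (fun j hj => (ptV_codeV hm x hj).symm)
    · intro k hk hne
      apply Set.indicator_of_notMem
      intro hmem
      exact hne ((codeV_eq_of_mem hm (Finset.mem_range.mp hk) hmem) ▸ rfl)
    · intro hmem
      exact absurd (Finset.mem_range.mpr (codeV_lt hm x t)) hmem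
  calc ∫ x, f x ∂μ = ∫ x, ∑ k ∈ Finset.range (Mgen m t),
        Set.indicator (cylVAt m t (ptV m k)) (fun _ => f (ptV m k)) x ∂μ := by
        congr 1; funext x; exact hrep x
  _ = ∑ k ∈ Finset.range (Mgen m t), ∫ x,
        Set.indicator (cylVAt m t (ptV m k)) (fun _ => f (ptV m k)) x ∂μ := by
        apply integral_finset_sum
        intro k _
        exact (integrable_const _).indicator (measurableSet_cylVAt t (ptV m k))
  _ = ∑ k ∈ Finset.range (Mgen m t), (Mgen m t : ℝ)⁻¹ * f (ptV m k) := by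
        apply Finset.sum_congr rfl
        intro k _
        rw [integral_indicator_const _ (measurableSet_cylVAt t (ptV m k)), measureReal_def, hμ t (ptV m k)]
        rw [smul_eq_mul]
        congr 1
        rw [ENNReal.toReal_inv]
        congr 1
  _ = (Mgen m t : ℝ)⁻¹ * ∑ k ∈ Finset.range (Mgen m t), f (ptV m k) := by
        rw [Finset.mul_sum]

end meas

section meas2
variable {m : ℕ → ℕ} (hm : ∀ k, 2 ≤ m k) [∀ k, NeZero (m k)]
include hm

lemma integral_cond_zero (μ : Measure (VilGroup m)) [IsProbabilityMeasure μ]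
    (hμ : IsVilHaar m μ) {t : ℕ} {f : VilGroup m → ℝ} (hmeas : Measurable f)
    (hcyl : ∀ x y : VilGroup m, (∀ j < t, x j = y j) → f x = f y) :
    (m t : ℝ) * ∫ x, (if x t = 0 then f x else 0) ∂μ = ∫ x, f x ∂μ := by
  set g : VilGroup m → ℝ := fun x => if x t = 0 then f x else 0 with hg
  have hgmeas : Measurable g := by
    apply Measurable.ite _ hmeas measurable_const
    exact (measurable_pi_apply t) (measurableSet_singleton 0)
  have hgcyl : ∀ x y : VilGroup m, (∀ j < t + 1, x j = y j) → g x = g y := by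
    intro x y h
    have hxt : x t = y t := h t (by omega)
    simp only [hg, hxt]
    by_cases h0 : y t = 0
    · simp only [h0, if_true]
      exact hcyl x y (fun j hj => h j (by omega))
    · simp [h0]
  rw [integral_cylindrical hm μ hμ hgmeas hgcyl,
    integral_cylindrical hm μ hμ hmeas (fun x y h => hcyl x y h)]
  have hMsucc : Mgen m (t+1) = m t * Mgen m t := rfl
  have hsum : ∑ k ∈ Finset.range (Mgen m (t+1)), g (ptV m k)
      = ∑ p ∈ Finset.range (Mgen m t), f (ptV m p) := by
    rw [hMsucc, sum_range_mul']
    rw [Finset.sum_eq_single 0]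
    · apply Finset.sum_congr rfl
      intro p hp
      have h0 : (0 : ℕ) * Mgen m t + p = p := by omega
      rw [h0, hg]
      have hpt : ptV m p t = 0 := by
        rw [ptV, vDigit_eq_zero_of_lt (Finset.mem_range.mp hp), Nat.cast_zero]
      simp [hpt]
    · intro c hc hne
      apply Finset.sum_eq_zero
      intro p hp
      have hdig : vDigit m (c * Mgen m t + p) t = c := by
        rw [vDigit_add hm (dvd_mul_left _ _) (Finset.mem_range.mp hp),
          vDigit_mul_Mgen_self hm, Nat.mod_eq_of_lt (Finset.mem_range.mp hc),
          vDigit_eq_zero_of_lt (lt_of_lt_of_le (Finset.mem_range.mp hp) (le_refl _)), Nat.add_zero]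
      have hpt : ptV m (c * Mgen m t + p) t ≠ 0 := by
        rw [ptV, hdig]
        intro hcast
        have := (ZMod.natCast_eq_zero_iff c (m t)).mp hcast
        exact hne (Nat.eq_zero_of_dvd_of_lt this (Finset.mem_range.mp hc))
      simp [hg, hpt]
    · intro h0
      exact absurd (Finset.mem_range.mpr (by have := hm t; omega)) h0
  rw [hsum, hMsucc]
  have hMt : ((Mgen m t : ℝ)) ≠ 0 := by
    have := Mgen_pos hm t; positivity
  have hmt : ((m t : ℝ)) ≠ 0 := by
    have := hm t; positivity
  push_cast
  field_simp

end meas2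

section final
variable {m : ℕ → ℕ} (hm : ∀ k, 2 ≤ m k) [∀ k, NeZero (m k)]
  (μ : Measure (VilGroup m)) [IsProbabilityMeasure μ] (hμ : IsVilHaar m μ)
include hm hμ

omit [∀ k, NeZero (m k)] [IsProbabilityMeasure μ] hμ in
lemma integrable_of_bound {f : VilGroup m → ℝ} [IsFiniteMeasure μ] (hf : Measurable f) (C : ℝ)
    (h : ∀ x, ‖f x‖ ≤ C) : Integrable f μ :=
  (integrable_const C).mono' hf.aestronglyMeasurable (ae_of_all _ h)

omit [∀ k, NeZero (m k)] hμ in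
lemma Fc_cylindrical {n t : ℕ} (hn : n ≤ Mgen m t) {x y : VilGroup m}
    (h : ∀ j < t, x j = y j) : Fc m n x = Fc m n y := by
  rw [Fc, Fc]
  apply Finset.sum_congr rfl
  intro j hj
  rw [vilenkin_cylindrical hm (lt_of_lt_of_le (Finset.mem_range.mp hj) hn) h]

omit [∀ k, NeZero (m k)] [IsProbabilityMeasure μ] hμ in
lemma integrable_Fc_abs [IsFiniteMeasure μ] (n : ℕ) :
    Integrable (fun x => Complex.abs (Fc m n x)) μ :=
  integrable_of_bound hm μ (measurable_Fc_abs n) ((n:ℝ) * n)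
    (fun x => by rw [Real.norm_eq_abs, _root_.abs_of_nonneg (AbsoluteValue.nonneg _ _)]; exact Fc_abs_le hm n x)

lemma tail_integral_const {N : ℕ} (hN : 0 < N) {t : ℕ} (ht : N ≤ t) :
    ∫ x in (cylV m N)ᶜ, Complex.abs (Fc m (Mgen m t) x) ∂μ
      = ∫ x in (cylV m N)ᶜ, Complex.abs (Fc m (Mgen m N) x) ∂μ := by
  induction t, ht using Nat.le_induction with
  | base => rfl
  | succ t ht ih =>
    set s : Set (VilGroup m) := (cylV m N)ᶜ with hs
    have hsm : MeasurableSet s := (measurableSet_cylV N).compl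
    set g : VilGroup m → ℝ := Set.indicator s (fun x => Complex.abs (Fc m (Mgen m t) x)) with hg
    have hgmeas : Measurable g := (measurable_Fc_abs _).indicator hsm
    have hgcyl : ∀ x y : VilGroup m, (∀ j < t, x j = y j) → g x = g y := by
      intro x y h
      have hmem : x ∈ s ↔ y ∈ s := by
        simp only [hs, Set.mem_compl_iff, cylV, Set.mem_setOf_eq]
        constructor
        · intro hx hy; exact hx (fun j hj => (h j (lt_of_lt_of_le hj ht)).symm ▸ hy j hj)
        · intro hx hy; exact hx (fun j hj => (h j (lt_of_lt_of_le hj ht)) ▸ hy j hj)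
      by_cases hx : x ∈ s
      · rw [hg]
        rw [Set.indicator_of_mem hx, Set.indicator_of_mem (hmem.mp hx)]
        rw [Fc_cylindrical hm (le_refl _) h]
      · rw [hg, Set.indicator_of_notMem hx, Set.indicator_of_notMem (fun hy => hx (hmem.mpr hy))]
    have key : ∀ x : VilGroup m,
        Set.indicator s (fun x => Complex.abs (Fc m (Mgen m (t+1)) x)) x
          = (m t : ℝ) * (if x t = 0 then g x else 0) := by
      intro x
      by_cases hx : x ∈ s
      · rw [Set.indicator_of_mem hx]
        have hxN : x ∉ cylV m N := hx
        have hxt : x ∉ cylV m t := fun hc => hxN (fun j hj => hc j (lt_of_lt_of_le hj ht))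
        rw [hg, Set.indicator_of_mem hx, Fc_Mgen_succ hm hxt]
        by_cases h0 : x t = 0
        · rw [if_pos h0, if_pos h0, map_mul]
          simp [Complex.abs_natCast]
        · rw [if_neg h0, if_neg h0]
          simp
      · rw [Set.indicator_of_notMem hx]
        rw [hg]
        rw [Set.indicator_of_notMem hx]
        simp
    calc ∫ x in s, Complex.abs (Fc m (Mgen m (t+1)) x) ∂μ
        = ∫ x, Set.indicator s (fun x => Complex.abs (Fc m (Mgen m (t+1)) x)) x ∂μ := by
          rw [integral_indicator hsm]
    _ = ∫ x, (m t : ℝ) * (if x t = 0 then g x else 0) ∂μ := by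
          congr 1; funext x; exact key x
    _ = (m t : ℝ) * ∫ x, (if x t = 0 then g x else 0) ∂μ := integral_const_mul _ _
    _ = ∫ x, g x ∂μ := integral_cond_zero hm μ hμ hgmeas hgcyl
    _ = ∫ x in s, Complex.abs (Fc m (Mgen m t) x) ∂μ := integral_indicator hsm
    _ = _ := ih

end final

section final2
variable {m : ℕ → ℕ} (hm : ∀ k, 2 ≤ m k) [∀ k, NeZero (m k)]
  (μ : Measure (VilGroup m)) [IsProbabilityMeasure μ] (hμ : IsVilHaar m μ)
include hm hμ

lemma main_bound {B N : ℕ} (hB : ∀ k, m k ≤ B) (hN : 0 < N) {n : ℕ} (hn : 1 ≤ n) :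
    ∫ x in (cylV m N)ᶜ, Complex.abs (vilenkinFejer m n x) ∂μ
      ≤ ((Mgen m N : ℝ))^2 * ((B:ℝ) * ((Nat.log 2 n : ℝ) + 1) + 1) / n := by
  set s : Set (VilGroup m) := (cylV m N)ᶜ with hs
  have hsm : MeasurableSet s := (measurableSet_cylV N).compl
  set K := Nat.log 2 n with hK
  set C : ℝ := ((Mgen m N : ℝ))^2 with hC
  have hC0 : 0 ≤ C := by positivity
  have hnK : n < Mgen m (K+1) :=
    lt_Mgen_of_lt_two_pow hm (Nat.lt_pow_succ_log_self (by norm_num) n)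
  have hn0 : (0:ℝ) < n := by exact_mod_cast hn
  -- rewrite Fejér kernel
  have hvf : ∀ x : VilGroup m, Complex.abs (vilenkinFejer m n x)
      = (1/(n:ℝ)) * Complex.abs (Fc m n x) := by
    intro x
    rw [vilenkinFejer, Gsum_eq hm, map_mul, map_div₀, map_one, Complex.abs_natCast]
  have hIN : ∀ t, N ≤ t → ∫ x in s, Complex.abs (Fc m (Mgen m t) x) ∂μ ≤ C := by
    intro t ht
    rw [tail_integral_const hm μ hμ hN ht]
    calc ∫ x in s, Complex.abs (Fc m (Mgen m N) x) ∂μ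
        ≤ ∫ x, Complex.abs (Fc m (Mgen m N) x) ∂μ :=
          setIntegral_le_integral (integrable_Fc_abs hm μ _)
            (ae_of_all _ (fun x => AbsoluteValue.nonneg _ _))
    _ ≤ ∫ _x, ((Mgen m N : ℝ) * (Mgen m N : ℝ)) ∂μ :=
          integral_mono (integrable_Fc_abs hm μ _) (integrable_const _) (Fc_abs_le hm _)
    _ = C := by
          rw [integral_const, measureReal_def, measure_univ, ENNReal.toReal_one, one_smul, hC, sq]
  have hint1 : Integrable (fun x => Complex.abs (Fc m n x)) μ := integrable_Fc_abs hm μ n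
  have hintsum : Integrable (fun x => (B:ℝ) * ∑ t ∈ Finset.Icc N K, Complex.abs (Fc m (Mgen m t) x) + C) μ :=
    ((integrable_finset_sum _ (fun t _ => integrable_Fc_abs hm μ _)).const_mul _).add
      (integrable_const _)
  have hmono : ∫ x in s, Complex.abs (Fc m n x) ∂μ
      ≤ ∫ x in s, ((B:ℝ) * ∑ t ∈ Finset.Icc N K, Complex.abs (Fc m (Mgen m t) x) + C) ∂μ := by
    apply setIntegral_mono_on hint1.integrableOn hintsum.integrableOn hsm
    intro x hx
    exact Fc_pointwise_bound hm hB hN hx n K hnK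
  have hrhs : ∫ x in s, ((B:ℝ) * ∑ t ∈ Finset.Icc N K, Complex.abs (Fc m (Mgen m t) x) + C) ∂μ
      ≤ (B:ℝ) * (((K:ℝ) + 1) * C) + C := by
    rw [integral_add (((integrable_finset_sum _ (fun t _ => integrable_Fc_abs hm μ _)).const_mul _).integrableOn)
        ((integrable_const _).integrableOn),
      integral_const_mul,
      integral_finset_sum _ (fun t _ => (integrable_Fc_abs hm μ _).integrableOn),
      setIntegral_const, measureReal_def]
    have h1 : ∑ t ∈ Finset.Icc N K, ∫ x in s, Complex.abs (Fc m (Mgen m t) x) ∂μ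
        ≤ ((K:ℝ) + 1) * C := by
      calc ∑ t ∈ Finset.Icc N K, ∫ x in s, Complex.abs (Fc m (Mgen m t) x) ∂μ
          ≤ ∑ _t ∈ Finset.Icc N K, C :=
            Finset.sum_le_sum (fun t ht => hIN t (Finset.mem_Icc.mp ht).1)
      _ = ((Finset.Icc N K).card : ℝ) * C := by rw [Finset.sum_const, nsmul_eq_mul]
      _ ≤ ((K:ℝ) + 1) * C := by
            apply mul_le_mul_of_nonneg_right _ hC0
            rw [Nat.card_Icc]
            push_cast
            have : (K + 1 - N : ℕ) ≤ K + 1 := by omega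
            exact_mod_cast le_trans (le_of_eq rfl) (by exact_mod_cast this)
    have h2 : (μ s).toReal ≤ 1 := by
      have h3 : (μ s).toReal ≤ (μ Set.univ).toReal :=
        ENNReal.toReal_mono (measure_ne_top μ _) (measure_mono (Set.subset_univ s))
      rwa [measure_univ, ENNReal.toReal_one] at h3
    have hsmul : (μ s).toReal • C ≤ C := by
      rw [smul_eq_mul]
      nlinarith [ENNReal.toReal_nonneg (a := μ s)]
    have hB0 : (0:ℝ) ≤ (B:ℝ) := by positivity
    nlinarith [h1, hsmul]
  calc ∫ x in s, Complex.abs (vilenkinFejer m n x) ∂μ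
      = (1/(n:ℝ)) * ∫ x in s, Complex.abs (Fc m n x) ∂μ := by
        rw [← integral_const_mul]
        congr 1; funext x; exact hvf x
  _ ≤ (1/(n:ℝ)) * ((B:ℝ) * (((K:ℝ) + 1) * C) + C) := by
        apply mul_le_mul_of_nonneg_left (le_trans hmono hrhs) (by positivity)
  _ = C * ((B:ℝ) * ((K:ℝ) + 1) + 1) / n := by ring
  _ = ((Mgen m N : ℝ))^2 * ((B:ℝ) * ((Nat.log 2 n : ℝ) + 1) + 1) / n := by rw [hC, hK]

end final2


/-- On a bounded Vilenkin group, for every fixed `N ∈ ℕ₊`,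
`∫_{G_m \ I_N} |K_n^ψ| dμ → 0` as `n → ∞`. -/
theorem vilenkinFejer_tail_integral_tendsto_zero
    (m : ℕ → ℕ) (hm : ∀ k, 2 ≤ m k) (hbd : ∃ B, ∀ k, m k ≤ B)
    (μ : Measure (VilGroup m)) [IsProbabilityMeasure μ] (hμ : IsVilHaar m μ)
    (N : ℕ) (hN : 0 < N) :
    Tendsto (fun n : ℕ => ∫ x in (cylV m N)ᶜ, ‖vilenkinFejer m n x‖ ∂μ)
      atTop (nhds 0) := by
  show Tendsto (fun n : ℕ => ∫ x in (cylV m N)ᶜ, Complex.abs (vilenkinFejer m n x) ∂μ) atTop (nhds 0)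
  obtain ⟨B, hB⟩ := hbd
  haveI : ∀ k, NeZero (m k) := fun k => ⟨by have := hm k; omega⟩
  have hlog2 : (0:ℝ) < Real.log 2 := Real.log_pos (by norm_num)
  set C0 : ℝ := ((Mgen m N : ℝ))^2 with hC0'
  have hC0 : 0 ≤ C0 := by positivity
  have hBR : (0:ℝ) ≤ (B:ℝ) := by positivity
  have t1 : Filter.Tendsto (fun n : ℕ => Real.log n / (n:ℝ)) Filter.atTop (nhds 0) :=
    (Real.isLittleO_log_id_atTop.tendsto_div_nhds_zero).comp tendsto_natCast_atTop_atTop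
  have t2 : Filter.Tendsto (fun n : ℕ => 1 / (n:ℝ)) Filter.atTop (nhds 0) :=
    tendsto_one_div_atTop_nhds_zero_nat
  have hh : Filter.Tendsto
      (fun n : ℕ => (C0*B/Real.log 2) * (Real.log n / n) + (C0*B + C0) * (1/n))
      Filter.atTop (nhds 0) := by
    have := (t1.const_mul (C0*(B:ℝ)/Real.log 2)).add (t2.const_mul (C0*(B:ℝ) + C0))
    simpa using this
  apply squeeze_zero' _ _ hh
  · exact Filter.Eventually.of_forall (fun n =>
      setIntegral_nonneg (measurableSet_cylV N).compl (fun x _ => AbsoluteValue.nonneg _ _))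
  · filter_upwards [Filter.eventually_ge_atTop 1] with n hn
    have hb := main_bound hm μ hμ hB hN hn
    refine hb.trans ?_
    have hn0 : (0:ℝ) < n := by exact_mod_cast hn
    have hpow : (2:ℝ)^(Nat.log 2 n) ≤ (n:ℝ) := by
      exact_mod_cast Nat.pow_log_le_self 2 (by omega : n ≠ 0)
    have hL : (Nat.log 2 n : ℝ) * Real.log 2 ≤ Real.log n := by
      calc (Nat.log 2 n:ℝ) * Real.log 2 = Real.log ((2:ℝ)^(Nat.log 2 n)) :=
            (Real.log_pow 2 _).symm
      _ ≤ Real.log n := Real.log_le_log (by positivity) hpow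
    have hL2 : (Nat.log 2 n : ℝ) ≤ Real.log n / Real.log 2 := (le_div_iff₀ hlog2).mpr hL
    have e1 : ((Mgen m N : ℝ))^2 * ((B:ℝ)*((Nat.log 2 n:ℝ)+1)+1)/n
        = (C0*B)*((Nat.log 2 n:ℝ))/n + (C0*B + C0)*(1/n) := by
      rw [hC0']; ring
    rw [e1]
    have e2 : (C0*B/Real.log 2) * (Real.log n / n) = (C0*B)*(Real.log n / Real.log 2)/n := by
      ring
    rw [e2]
    apply add_le_add_left
    exact (div_le_div_iff_of_pos_right hn0).mpr (mul_le_mul_of_nonneg_left hL2 (by positivity))
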